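/- For a partition μ of n with ℓ(μ) parts, and with μ^r_+ = the partition formed by parts of μ strictly greater than r and μ^r_- = parts strictly less than r: Σ_{r=1}^{n-1} v^{n-r}[n-r]_v (q^{ℓ(μ)} + q^{ℓ(μ)-1} - q^{ℓ(μ)-1+ℓ(μ^r_+)} - q^{ℓ(μ^r_-)}) · q^{Σ_i min(r, μ_i) - ℓ(μ)} = v^n [n]_v (q^{ℓ(μ)-1} - 1). -/

import Mathlib

noncomputable section

/-- The balanced quantum integer `[m]_v = (v^m - v^{-m})/(v - v⁻¹)` in `ℚ(v)`,
for `m ∈ ℤ`. -/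
def qIntZ (m : ℤ) : RatFunc ℚ :=
  ((RatFunc.X : RatFunc ℚ) ^ m - (RatFunc.X : RatFunc ℚ) ^ (-m))
    / (RatFunc.X - (RatFunc.X : RatFunc ℚ)⁻¹)

/-! ### Auxiliary definitions and lemmas -/

def sfun (μ : Multiset ℕ) (r : ℕ) : ℕ := (μ.map (min r)).sum
def cfun (μ : Multiset ℕ) (r : ℕ) : ℕ := (μ.filter fun x => r ≤ x).card

def Tf (μ : Multiset ℕ) (r : ℕ) : RatFunc ℚ :=
  (((RatFunc.X : RatFunc ℚ)^2) ^ ((μ.sum : ℤ) - r - 1) - 1)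
    * ((RatFunc.X : RatFunc ℚ)^2) ^ ((sfun μ r : ℤ))
def Uf (μ : Multiset ℕ) (r : ℕ) : RatFunc ℚ :=
  (((RatFunc.X : RatFunc ℚ)^2) ^ ((μ.sum : ℤ) - r) - ((RatFunc.X : RatFunc ℚ)^2)⁻¹)
    * ((RatFunc.X : RatFunc ℚ)^2) ^ ((sfun μ r : ℤ))

lemma sfun_succ (μ : Multiset ℕ) (r : ℕ) : sfun μ (r+1) = sfun μ r + cfun μ (r+1) := by
  unfold sfun cfun
  induction μ using Multiset.induction with
  | empty => simp
  | cons a t ih => simp [Multiset.filter_cons] at ih ⊢; split <;> simp <;> omega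

lemma cfun_le (μ : Multiset ℕ) (r : ℕ) : cfun μ r ≤ μ.card :=
  Multiset.card_le_card (Multiset.filter_le _ _)

lemma filter_lt_card (μ : Multiset ℕ) (r : ℕ) :
    (μ.filter fun x => x < r).card = μ.card - cfun μ r := by
  unfold cfun
  induction μ using Multiset.induction with
  | empty => simp
  | cons a t ih =>
    simp only [Multiset.filter_cons, Multiset.card_cons]
    have h1 := cfun_le t r
    unfold cfun at h1
    by_cases h : a < r
    · rw [if_pos h, if_neg (by omega)]
      simp; omega
    · rw [if_neg h, if_pos (by omega)]
      simp; omega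

lemma filter_gt_card (μ : Multiset ℕ) (r : ℕ) :
    (μ.filter fun x => r < x).card = cfun μ (r+1) := by
  unfold cfun
  rw [Multiset.filter_congr (fun x _ => by omega : ∀ x ∈ μ, (r < x) ↔ (r+1 ≤ x))]

lemma sfun_zero (μ : Multiset ℕ) : sfun μ 0 = 0 := by
  unfold sfun; simp [Nat.zero_min]

lemma sfun_one (μ : Multiset ℕ) (hpos : ∀ x ∈ μ, 0 < x) : sfun μ 1 = μ.card := by
  unfold sfun
  induction μ using Multiset.induction with
  | empty => simp
  | cons a t ih =>
    simp only [Multiset.map_cons, Multiset.sum_cons, Multiset.card_cons]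
    rw [ih (fun x hx => hpos x (Multiset.mem_cons_of_mem hx))]
    have : 0 < a := hpos a (Multiset.mem_cons_self a t)
    omega

lemma sfun_top (μ : Multiset ℕ) : sfun μ μ.sum = μ.sum := by
  unfold sfun
  have : μ.map (min μ.sum) = μ.map id := by
    apply Multiset.map_congr rfl
    intro x hx
    exact min_eq_right (Multiset.single_le_sum (fun _ _ => Nat.zero_le _) x hx)
  rw [this, Multiset.map_id]

lemma telA (m : ℕ) (f : ℕ → RatFunc ℚ) :
    ∑ r ∈ Finset.Icc 1 m, (f r - f (r-1)) = f m - f 0 := by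
  rw [← Finset.Ico_add_one_right_eq_Icc, Finset.sum_Ico_eq_sum_range]
  simp only [Nat.add_sub_cancel]
  have : ∀ i, f (1+i) - f (1+i-1) = f (i+1) - f i := by
    intro i; rw [Nat.add_comm 1 i, Nat.add_sub_cancel]
  simp only [this]
  exact Finset.sum_range_sub f m

lemma telB (m : ℕ) (f : ℕ → RatFunc ℚ) :
    ∑ r ∈ Finset.Icc 1 m, (f r - f (r+1)) = f 1 - f (m+1) := by
  rw [← Finset.Ico_add_one_right_eq_Icc, Finset.sum_Ico_eq_sum_range]
  simp only [Nat.add_sub_cancel]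
  have : ∀ i, f (1+i) - f (1+i+1) = (fun j => f (j+1)) i - (fun j => f (j+1)) (i+1) := by
    intro i; simp [Nat.add_comm 1 i]
  simp only [this]
  exact Finset.sum_range_sub' (fun j => f (j+1)) m

lemma Xsq_sub_one_ne : ((RatFunc.X : RatFunc ℚ)^2 - 1) ≠ 0 := by
  intro h
  have h2 : (algebraMap (Polynomial ℚ) (RatFunc ℚ)) (Polynomial.X^2 - 1)
      = algebraMap _ _ (0 : Polynomial ℚ) := by
    simpa [map_sub, map_pow, RatFunc.algebraMap_X] using h
  have h4 := RatFunc.algebraMap_injective ℚ h2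
  have := congrArg (Polynomial.eval 0) h4
  simp at this

lemma key1 (m : ℤ) : (RatFunc.X : RatFunc ℚ) ^ m * qIntZ m
    = (((RatFunc.X : RatFunc ℚ)^2) ^ m - 1)
      * ((RatFunc.X : RatFunc ℚ) / ((RatFunc.X : RatFunc ℚ)^2 - 1)) := by
  have hx : (RatFunc.X : RatFunc ℚ) ≠ 0 := RatFunc.X_ne_zero
  set x : RatFunc ℚ := RatFunc.X with hxd
  have e1 : x ^ m * (x ^ m - x ^ (-m)) = (x^2) ^ m - 1 := by
    rw [mul_sub, ← zpow_add₀ hx, ← zpow_add₀ hx, ← zpow_natCast x 2, ← zpow_mul]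
    norm_num [two_mul]
  have e2 : x - x⁻¹ = (x^2 - 1)/x := by field_simp
  rw [qIntZ, mul_div_assoc', e1, e2, div_div_eq_mul_div, mul_div_assoc]

lemma alg {K : Type*} [Field K] (q : K) (hq : q ≠ 0) (N L R S C D : ℤ) :
    (q^(N - R) - 1) * (q^L + q^(L-1) - q^(L-1+D) - q^(L - C)) * q^((S + C) - L)
    = ((q^(N - R - 1) - 1) * q^(S+C) - (q^(N-(R-1)-1) - 1) * q^S)
      + ((q^(N - R) - q⁻¹) * q^(S+C) - (q^(N-(R+1)) - q⁻¹) * q^(S+C+D)) := by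
  have hinv : (q⁻¹ : K) = q^(-1 : ℤ) := by simp
  rw [hinv]
  simp only [sub_mul, add_mul, mul_sub, mul_add, one_mul, ← zpow_add₀ hq]
  ring_nf

lemma alg2 {K : Type*} [Field K] (q : K) (hq : q ≠ 0) (N L : ℤ) :
    ((0 : K) - (q^(N - 0 - 1) - 1) * q^(0:ℤ))
      + ((q^(N-1) - q⁻¹) * q^L - (q^(N-(N:ℤ)) - q⁻¹) * q^N)
    = (q^N - 1) * (q^(L-1) - 1) := by
  have hinv : (q⁻¹ : K) = q^(-1 : ℤ) := by simp
  rw [hinv]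
  simp only [sub_mul, add_mul, mul_sub, mul_add, one_mul, mul_one, ← zpow_add₀ hq]
  ring_nf
  simp

lemma perterm (μ : Multiset ℕ) (r : ℕ) (hr1 : 1 ≤ r) :
    (((RatFunc.X : RatFunc ℚ)^2) ^ ((μ.sum : ℤ) - r) - 1)
      * (((RatFunc.X : RatFunc ℚ) ^ 2) ^ (μ.card : ℤ)
          + ((RatFunc.X : RatFunc ℚ) ^ 2) ^ ((μ.card : ℤ) - 1)
          - ((RatFunc.X : RatFunc ℚ) ^ 2)
              ^ ((μ.card : ℤ) - 1 + ((μ.filter fun x => r < x).card : ℤ))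
          - ((RatFunc.X : RatFunc ℚ) ^ 2) ^ (((μ.filter fun x => x < r).card : ℤ)))
      * ((RatFunc.X : RatFunc ℚ) ^ 2) ^ (((μ.map (min r)).sum : ℤ) - (μ.card : ℤ))
    = (Tf μ r - Tf μ (r-1)) + (Uf μ r - Uf μ (r+1)) := by
  have hx : (RatFunc.X : RatFunc ℚ) ≠ 0 := RatFunc.X_ne_zero
  have hq : ((RatFunc.X : RatFunc ℚ)^2) ≠ 0 := pow_ne_zero _ hx
  have hsr : ((μ.map (min r)).sum : ℤ) = (sfun μ (r-1) : ℤ) + (cfun μ r : ℤ) := by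
    have h := sfun_succ μ (r-1)
    rw [Nat.sub_add_cancel hr1] at h
    unfold sfun at h
    exact_mod_cast h
  have hsr1 : (sfun μ (r+1) : ℤ)
      = ((sfun μ (r-1) : ℤ) + (cfun μ r : ℤ)) + (cfun μ (r+1) : ℤ) := by
    have h := sfun_succ μ r
    have h2 := sfun_succ μ (r-1)
    rw [Nat.sub_add_cancel hr1] at h2
    push_cast [h, h2]; ring
  have ha : ((μ.filter fun x => r < x).card : ℤ) = (cfun μ (r+1) : ℤ) := by
    exact_mod_cast filter_gt_card μ r
  have hb : ((μ.filter fun x => x < r).card : ℤ) = (μ.card : ℤ) - (cfun μ r : ℤ) := by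
    have h1 := filter_lt_card μ r
    have h2 := cfun_le μ r
    omega
  have hsfr : (sfun μ r : ℤ) = (sfun μ (r-1) : ℤ) + (cfun μ r : ℤ) := hsr
  have hcast1 : ((r - 1 : ℕ) : ℤ) = (r : ℤ) - 1 := by
    omega
  have hcast2 : ((r + 1 : ℕ) : ℤ) = (r : ℤ) + 1 := by push_cast; ring
  unfold Tf Uf
  rw [hsr, ha, hb, hsfr, hsr1, hcast1, hcast2]
  exact alg _ hq _ _ _ _ _ _

/-- Lemma 4.3: for a partition `μ` of `n` with `ℓ(μ)` parts,
working in `ℚ(v)` with `q = v²`, and with `ℓ(μ^r_+)` (resp. `ℓ(μ^r_-)`) the number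
of parts of `μ` strictly greater (resp. strictly less) than `r`:
`Σ_{r=1}^{n-1} v^{n-r}[n-r]_v (q^{ℓ(μ)} + q^{ℓ(μ)-1} - q^{ℓ(μ)-1+ℓ(μ^r_+)} - q^{ℓ(μ^r_-)})
   ⬝ q^{Σ_i min(r,μ_i) - ℓ(μ)}  =  v^n [n]_v (q^{ℓ(μ)-1} - 1)`. -/
theorem stmt7 (μ : Multiset ℕ) (hpos : ∀ x ∈ μ, 0 < x) :
    ∑ r ∈ Finset.Icc 1 (μ.sum - 1),
      (RatFunc.X : RatFunc ℚ) ^ ((μ.sum : ℤ) - r) * qIntZ ((μ.sum : ℤ) - r)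
        * (((RatFunc.X : RatFunc ℚ) ^ 2) ^ (μ.card : ℤ)
            + ((RatFunc.X : RatFunc ℚ) ^ 2) ^ ((μ.card : ℤ) - 1)
            - ((RatFunc.X : RatFunc ℚ) ^ 2)
                ^ ((μ.card : ℤ) - 1 + ((μ.filter fun x => r < x).card : ℤ))
            - ((RatFunc.X : RatFunc ℚ) ^ 2) ^ (((μ.filter fun x => x < r).card : ℤ)))
        * ((RatFunc.X : RatFunc ℚ) ^ 2)
            ^ (((μ.map (min r)).sum : ℤ) - (μ.card : ℤ))
      = (RatFunc.X : RatFunc ℚ) ^ (μ.sum : ℤ) * qIntZ (μ.sum)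
          * (((RatFunc.X : RatFunc ℚ) ^ 2) ^ ((μ.card : ℤ) - 1) - 1) := by
  have hx : (RatFunc.X : RatFunc ℚ) ≠ 0 := RatFunc.X_ne_zero
  have hq : ((RatFunc.X : RatFunc ℚ)^2) ≠ 0 := pow_ne_zero _ hx
  by_cases hn0 : μ.sum = 0
  · rw [hn0]
    simp [qIntZ]
  · have hn : 1 ≤ μ.sum := Nat.one_le_iff_ne_zero.mpr hn0
    -- rewrite each summand
    have step1 : ∀ r ∈ Finset.Icc 1 (μ.sum - 1),
        (RatFunc.X : RatFunc ℚ) ^ ((μ.sum : ℤ) - r) * qIntZ ((μ.sum : ℤ) - r)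
          * (((RatFunc.X : RatFunc ℚ) ^ 2) ^ (μ.card : ℤ)
              + ((RatFunc.X : RatFunc ℚ) ^ 2) ^ ((μ.card : ℤ) - 1)
              - ((RatFunc.X : RatFunc ℚ) ^ 2)
                  ^ ((μ.card : ℤ) - 1 + ((μ.filter fun x => r < x).card : ℤ))
              - ((RatFunc.X : RatFunc ℚ) ^ 2) ^ (((μ.filter fun x => x < r).card : ℤ)))
          * ((RatFunc.X : RatFunc ℚ) ^ 2) ^ (((μ.map (min r)).sum : ℤ) - (μ.card : ℤ))
        = ((RatFunc.X : RatFunc ℚ) / ((RatFunc.X : RatFunc ℚ)^2 - 1))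
            * ((Tf μ r - Tf μ (r-1)) + (Uf μ r - Uf μ (r+1))) := by
      intro r hr
      rw [Finset.mem_Icc] at hr
      rw [key1, ← perterm μ r hr.1]
      ring
    rw [Finset.sum_congr rfl step1, ← Finset.mul_sum, Finset.sum_add_distrib,
      telA (μ.sum - 1) (Tf μ), telB (μ.sum - 1) (Uf μ), Nat.sub_add_cancel hn]
    -- boundary values
    have hT1 : Tf μ (μ.sum - 1) = 0 := by
      unfold Tf
      have : ((μ.sum : ℤ) - ((μ.sum - 1 : ℕ) : ℤ) - 1) = 0 := by omega
      rw [this, zpow_zero, sub_self, zero_mul]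
    have hT0 : Tf μ 0 = (((RatFunc.X : RatFunc ℚ)^2) ^ ((μ.sum : ℤ) - 0 - 1) - 1)
        * ((RatFunc.X : RatFunc ℚ)^2) ^ (0 : ℤ) := by
      unfold Tf
      rw [sfun_zero]
      norm_num
    have hU1 : Uf μ 1 = (((RatFunc.X : RatFunc ℚ)^2) ^ ((μ.sum : ℤ) - 1)
        - ((RatFunc.X : RatFunc ℚ)^2)⁻¹) * ((RatFunc.X : RatFunc ℚ)^2) ^ ((μ.card : ℤ)) := by
      unfold Uf
      rw [sfun_one μ hpos]
      norm_num
    have hUn : Uf μ μ.sum = (((RatFunc.X : RatFunc ℚ)^2) ^ ((μ.sum : ℤ) - (μ.sum : ℤ))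
        - ((RatFunc.X : RatFunc ℚ)^2)⁻¹) * ((RatFunc.X : RatFunc ℚ)^2) ^ ((μ.sum : ℤ)) := by
      unfold Uf
      rw [sfun_top]
    rw [hT1, hT0, hU1, hUn, key1]
    rw [alg2 _ hq (μ.sum : ℤ) (μ.card : ℤ)]
    ring

end
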